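/- Let H be a cocommutative Hopf algebroid over R (in Lu's sense) such that ι(R) is contained in the center of H. Then the antipode S is R-linear, i.e. S(ι(f)x) = ι(f)S(x) for all f ∈ R and x ∈ H, and ε ∘ S = ε; consequently H is a Hopf R-algebra, i.e. all its structure maps are R-linear. -/

import Mathlib

open scoped TensorProduct

/-!
Lu's definition of a Hopf algebroid with commutative base algebra `R`: a unital
`k`-algebra `H` with an algebra homomorphism `ι : R → H` making `H` a left `R`-module
via `f • x = ι(f)x`, an `R`-linear coassociative coproduct `Δ : H → H ⊗_R H` (handled
via a chosen Sweedler representation `Δ(x) = ∑ c1 x i ⊗ c2 x i`) satisfying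
`Δ(x)(ι(f) ⊗ 1 − 1 ⊗ ι(f)) = 0` and multiplicativity, an `R`-linear counit `ε` whose
kernel is a left ideal and with `ι(ε(x₁))x₂ = x = ι(ε(x₂))x₁`, and an algebra
anti-isomorphism `S` with `S ∘ ι = ι`, `m(S ⊗ id)Δ = ι∘ε∘S` and `m(id ⊗ S)Δ = ι∘ε`.
-/

structure LuHopfAlgebroid (k R H : Type*) [Field k] [CharZero k] [CommRing R]
    [Algebra k R] [Ring H] [Algebra k H] [Module R H] where
  /-- the source (= target) map -/
  iota : R →ₐ[k] H
  /-- `H` is a left `R`-module via `ι` -/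
  smul_def : ∀ (f : R) (x : H), f • x = iota f * x
  /-- size of the chosen Sweedler representation of the coproduct -/
  n : H → ℕ
  /-- first Sweedler components of the coproduct -/
  c1 : H → ℕ → H
  /-- second Sweedler components of the coproduct -/
  c2 : H → ℕ → H
  /-- the coproduct, an `R`-linear map `H → H ⊗_R H` -/
  comul : H →ₗ[R] H ⊗[R] H
  repr : ∀ x : H, comul x = ∑ i ∈ Finset.range (n x), c1 x i ⊗ₜ[R] c2 x i
  /-- coassociativity of the coproduct -/
  comul_coassoc : ∀ x : H,
      ∑ i ∈ Finset.range (n x), ∑ j ∈ Finset.range (n (c1 x i)),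
        c1 (c1 x i) j ⊗ₜ[R] (c2 (c1 x i) j ⊗ₜ[R] c2 x i)
    = ∑ i ∈ Finset.range (n x), ∑ j ∈ Finset.range (n (c2 x i)),
        c1 x i ⊗ₜ[R] (c1 (c2 x i) j ⊗ₜ[R] c2 (c2 x i) j)
  /-- `Δ(x)(ι(f) ⊗ 1 − 1 ⊗ ι(f)) = 0` -/
  comul_balanced : ∀ (f : R) (x : H),
      ∑ i ∈ Finset.range (n x), (c1 x i * iota f) ⊗ₜ[R] c2 x i
    = ∑ i ∈ Finset.range (n x), c1 x i ⊗ₜ[R] (c2 x i * iota f)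
  /-- `Δ` is an algebra homomorphism onto its image -/
  comul_mul : ∀ x y : H, comul (x * y)
    = ∑ i ∈ Finset.range (n x), ∑ j ∈ Finset.range (n y),
        (c1 x i * c1 y j) ⊗ₜ[R] (c2 x i * c2 y j)
  comul_one : comul 1 = 1 ⊗ₜ[R] 1
  /-- the counit, an `R`-linear map `H → R` -/
  counit : H →ₗ[R] R
  counit_one : counit 1 = 1
  /-- the kernel of `ε` is a left ideal -/
  counit_ker : ∀ x y : H, counit (x * (y - iota (counit y))) = 0
  /-- `ι(ε(x₁))x₂ = x` -/
  counit_left : ∀ x : H, ∑ i ∈ Finset.range (n x), counit (c1 x i) • c2 x i = x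
  /-- `ι(ε(x₂))x₁ = x` -/
  counit_right : ∀ x : H, ∑ i ∈ Finset.range (n x), counit (c2 x i) • c1 x i = x
  /-- the antipode -/
  S : H → H
  S_add : ∀ x y : H, S (x + y) = S x + S y
  S_smulk : ∀ (a : k) (x : H), S (a • x) = a • S x
  S_bij : Function.Bijective S
  S_one : S 1 = 1
  /-- `S` is an algebra anti-isomorphism -/
  S_antimul : ∀ x y : H, S (x * y) = S y * S x
  /-- `S ∘ ι = ι` -/
  S_iota : ∀ f : R, S (iota f) = iota f
  /-- `m(S ⊗ id)Δ = ι∘ε∘S` -/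
  S_antipode_left : ∀ x : H,
    ∑ i ∈ Finset.range (n x), S (c1 x i) * c2 x i = iota (counit (S x))
  /-- `m(id ⊗ S)Δ = ι∘ε` -/
  S_antipode_right : ∀ x : H,
    ∑ i ∈ Finset.range (n x), c1 x i * S (c2 x i) = iota (counit x)

/-- if `H` is a cocommutative Hopf algebroid over `R` (in Lu's sense) such
that `ι(R)` is contained in the center of `H`, then the antipode is `R`-linear,
`ε ∘ S = ε`, and consequently `H` is a Hopf `R`-algebra. -/
theorem stmt0 {k R H : Type*} [Field k] [CharZero k] [CommRing R]
    [Algebra k R] [Ring H] [Algebra k H] [Module R H]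
    (L : LuHopfAlgebroid k R H)
    -- `H` is cocommutative
    (hcc : ∀ x : H, (TensorProduct.comm R H H) (L.comul x) = L.comul x)
    -- `ι(R)` lies in the center of `H`
    (hcentral : ∀ (f : R) (x : H), L.iota f * x = x * L.iota f) :
    -- `S` is `R`-linear, i.e. `S(ι(f)x) = ι(f)S(x)`
    (∀ (f : R) (x : H), L.S (L.iota f * x) = L.iota f * L.S x)
    -- and `ε ∘ S = ε`
    ∧ (∀ x : H, L.counit (L.S x) = L.counit x) := by
  have hS : ∀ (f : R) (x : H), L.S (L.iota f * x) = L.iota f * L.S x := by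
    intro f x
    rw [L.S_antimul, L.S_iota, ← hcentral]
  have heps_iota : ∀ f : R, L.counit (L.iota f) = f := by
    intro f
    have h : L.iota f = f • (1 : H) := by rw [L.smul_def, mul_one]
    rw [h, map_smul, L.counit_one, smul_eq_mul, mul_one]
  have hmul : ∀ x y : H, L.counit (x * y) = L.counit x * L.counit y := by
    intro x y
    have h0 := L.counit_ker x y
    have h : x * (y - L.iota (L.counit y)) = x * y - (L.counit y) • x := by
      rw [mul_sub, ← hcentral, ← L.smul_def]
    rw [h, map_sub, map_smul, smul_eq_mul, sub_eq_zero] at h0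
    rw [h0, mul_comm]
  let B : H →ₗ[R] H →ₗ[R] R := LinearMap.mk₂ R (fun x y => L.counit (L.S x) * L.counit y)
    (fun x x' y => by rw [L.S_add, map_add, add_mul])
    (fun f x y => by
      rw [L.smul_def f x, hS, ← L.smul_def, map_smul, smul_eq_mul, smul_eq_mul, mul_assoc])
    (fun x y y' => by rw [map_add, mul_add])
    (fun f x y => by rw [map_smul, smul_eq_mul, smul_eq_mul]; ring)
  let Bl : H ⊗[R] H →ₗ[R] R := TensorProduct.lift B
  have key : ∀ x : H,
      ∑ i ∈ Finset.range (L.n x), L.counit (L.S (L.c2 x i)) * L.counit (L.c1 x i)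
      = ∑ i ∈ Finset.range (L.n x), L.counit (L.S (L.c1 x i)) * L.counit (L.c2 x i) := by
    intro x
    have h := congrArg Bl (hcc x)
    rw [L.repr] at h
    simpa [Bl, B, map_sum] using h
  refine ⟨hS, fun x => ?_⟩
  have h1 : L.counit (L.S x) = ∑ i ∈ Finset.range (L.n x),
      L.counit (L.S (L.c1 x i)) * L.counit (L.c2 x i) := by
    have h := congrArg L.counit (L.S_antipode_left x)
    rw [heps_iota, map_sum] at h
    simp only [hmul] at h
    exact h.symm
  have h2 : L.counit x = ∑ i ∈ Finset.range (L.n x),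
      L.counit (L.c1 x i) * L.counit (L.S (L.c2 x i)) := by
    have h := congrArg L.counit (L.S_antipode_right x)
    rw [heps_iota, map_sum] at h
    simp only [hmul] at h
    exact h.symm
  rw [h1, ← key, h2]
  exact Finset.sum_congr rfl (fun i _ => mul_comm _ _)
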